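/- Let f = αx² + βxy + γy² be an integral primitive binary quadratic form with Δ(f) ≠ 0 and α ≠ 0, and let F be an integral binary quartic form with F_{M_f} = F and Δ(F) ≠ 0. Then L_f(F) and K_f(F) are integers, (L_f(F)² + 4K_f(F))/9 and (2L_f(F)² − K_f(F))/9 are integers, and 9Δ(f) divides 4(2L_f(F)² − K_f(F)). -/

import Mathlib

open Polynomial

/-- Value of the binary quartic form `a4 x⁴ + a3 x³y + a2 x²y² + a1 xy³ + a0 y⁴`. -/
def qval {R : Type*} [CommRing R] (a4 a3 a2 a1 a0 x y : R) : R :=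
  a4*x^4 + a3*x^3*y + a2*x^2*y^2 + a1*x*y^3 + a0*y^4

/-- Value of the binary quadratic form `a x² + b xy + c y²`. -/
def qdval {R : Type*} [CommRing R] (a b c x y : R) : R :=
  a*x^2 + b*x*y + c*y^2

/-- The invariant `I(F)`. -/
def Iinv {R : Type*} [CommRing R] (a4 a3 a2 a1 a0 : R) : R :=
  12*a4*a0 - 3*a3*a1 + a2^2

/-- The invariant `J(F)`. -/
def Jinv {R : Type*} [CommRing R] (a4 a3 a2 a1 a0 : R) : R :=
  72*a4*a2*a0 + 9*a3*a2*a1 - 27*a4*a1^2 - 27*a3^2*a0 - 2*a2^3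

/-- `F_{M_f} = F` where `f = a x² + b xy + c y²`, `M_f = [[b, 2c], [-2a, -b]]`,
and the action is the twisted action `F_T = det(T)⁻² F ∘ T`
(note `det M_f = -(b²-4ac)`, so the condition is division-free). -/
def fixedMf {R : Type*} [CommRing R] (a b c a4 a3 a2 a1 a0 : R) : Prop :=
  ∀ x y : R, qval a4 a3 a2 a1 a0 (b*x + 2*c*y) (-(2*a*x) - b*y)
    = (b^2 - 4*a*c)^2 * qval a4 a3 a2 a1 a0 x y

theorem LK_integrality (a b c : ℤ) (hprim : Int.gcd (Int.gcd a b) c = 1)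
    (hdisc : b^2 - 4*a*c ≠ 0) (ha : a ≠ 0)
    (a4 a3 a2 a1 a0 : ℤ) (hfix : fixedMf a b c a4 a3 a2 a1 a0)
    (hΔ : 4 * (Iinv a4 a3 a2 a1 a0)^3 - (Jinv a4 a3 a2 a1 a0)^2 ≠ 0)
    (L K : ℚ)
    (hL : L = -(12*(c:ℚ)*(a4:ℚ) - 3*(b:ℚ)*(a3:ℚ) + 2*(a:ℚ)*(a2:ℚ)) / (2*(a:ℚ)))
    (hK : K = (72*(b:ℚ)^2*(c:ℚ)*(a4:ℚ)^2 + 9*(a:ℚ)*((b:ℚ)^2 + 4*(a:ℚ)*(c:ℚ))*(a3:ℚ)^2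
      + 8*(a:ℚ)^3*(a2:ℚ)^2 - 18*(b:ℚ)*((b:ℚ)^2 + 4*(a:ℚ)*(c:ℚ))*(a4:ℚ)*(a3:ℚ)
      + 12*(a:ℚ)*(3*(b:ℚ)^2 - 4*(a:ℚ)*(c:ℚ))*(a4:ℚ)*(a2:ℚ)
      - 24*(a:ℚ)^2*(b:ℚ)*(a3:ℚ)*(a2:ℚ)) / (4*(a:ℚ)^3)) :
    (∃ l : ℤ, L = l) ∧ (∃ k : ℤ, K = k) ∧
    (∃ m : ℤ, (L^2 + 4*K)/9 = m) ∧ (∃ n : ℤ, (2*L^2 - K)/9 = n) ∧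
    (∃ d : ℤ, 4*(2*L^2 - K) = (9*(b^2 - 4*a*c) : ℤ) * d) := by

  -- Evaluations of the fixed-form condition
  have h1 := hfix 1 1
  have h2 := hfix 1 (-1)
  have h3 := hfix 2 1
  have h4 := hfix (-2) 1
  have h5 := hfix 1 0
  simp only [qval] at h1 h2 h3 h4 h5
  -- The two key integral relations forced by the fixed-form condition
  have hE1 : 2*a^2*a1 = 4*b*c*a4 + 2*a*b*a2 - (b^2+2*a*c)*a3 := by
    have key : (2*a^2*a1 - (4*b*c*a4 + 2*a*b*a2 - (b^2+2*a*c)*a3)) *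
        ((-384) * a^4 * (b^2 - 4*a*c)) = 0 := by
      linear_combination (384*a^3*b) * h5 + (-16*a^4) * h3 + (16*a^4) * h4
        + (32*a^4) * h1 + (-32*a^4) * h2
    have hne : ((-384:ℤ) * a^4 * (b^2 - 4*a*c)) ≠ 0 :=
      mul_ne_zero (mul_ne_zero (by norm_num) (pow_ne_zero _ ha)) hdisc
    have := (mul_eq_zero.mp key).resolve_right hne
    linarith [this]
  have hE0 : 8*a^3*a0 = 4*c*(b^2+2*a*c)*a4 - b*(b^2+4*a*c)*a3 + 2*a*b^2*a2 := by
    have key : (8*a^3*a0 - (4*c*(b^2+2*a*c)*a4 - b*(b^2+4*a*c)*a3 + 2*a*b^2*a2)) *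
        ((-96) * a^3 * (b^2 - 4*a*c)) = 0 := by
      linear_combination (-12*(-12*a^2*b^2-16*a^3*c)) * h5 + (-8*a^3*b) * h3
        + (8*a^3*b) * h4 + (16*a^3*b) * h1 + (-16*a^3*b) * h2
    have hne : ((-96:ℤ) * a^3 * (b^2 - 4*a*c)) ≠ 0 :=
      mul_ne_zero (mul_ne_zero (by norm_num) (pow_ne_zero _ ha)) hdisc
    have := (mul_eq_zero.mp key).resolve_right hne
    linarith [this]
  have h2a : (2*a : ℤ) ≠ 0 := mul_ne_zero two_ne_zero ha
  -- b·t = 2a·m and c·t = a·n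
  have hbt : b*(b*a3 - 4*c*a4) = 2*a*(b*a2 - c*a3 - a*a1) := by linear_combination hE1
  have hct : c*(b*a3 - 4*c*a4) = a*(b*a1 - 4*a*a0) := by
    have key : (2*a) * (c*(b*a3 - 4*c*a4)) = (2*a) * (a*(b*a1 - 4*a*a0)) := by
      linear_combination hE0 - b*hE1
    exact mul_left_cancel₀ h2a key
  -- Bézout certificate from primitivity
  have hg1 := Int.gcd_eq_gcd_ab a b
  have hg2 := Int.gcd_eq_gcd_ab (Int.gcd a b : ℤ) c
  rw [hprim] at hg2
  push_cast at hg2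
  set X : ℤ := Int.gcdA a b * Int.gcdA (Int.gcd a b : ℤ) c with hX
  set Y : ℤ := Int.gcdB a b * Int.gcdA (Int.gcd a b : ℤ) c with hY
  set Z : ℤ := Int.gcdB (Int.gcd a b : ℤ) c with hZ
  have hbez : a*X + b*Y + c*Z = 1 := by
    rw [hX, hY, hZ]
    linear_combination (-(Int.gcdA (Int.gcd a b : ℤ) c)) * hg1 - hg2
  -- a ∣ t, with explicit witness
  set w : ℤ := X*(b*a3 - 4*c*a4) + 2*(b*a2 - c*a3 - a*a1)*Y + (b*a1 - 4*a*a0)*Z with hwdef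
  have hw : b*a3 - 4*c*a4 = a*w := by
    rw [hwdef]
    linear_combination (-(b*a3 - 4*c*a4))*hbez + Y*hbt + Z*hct
  -- w is even
  have hweven : Even w := by
    rcases Int.even_or_odd b with hbe | hbo
    · -- b even
      rcases Int.even_or_odd a with hae | hao
      · -- a even, so c odd
        have hco : ¬ Even c := by
          intro hce
          have hda : (2:ℤ) ∣ a := hae.two_dvd
          have hdb : (2:ℤ) ∣ b := hbe.two_dvd
          have hdc : (2:ℤ) ∣ c := hce.two_dvd
          have : (2:ℤ) ∣ (Int.gcd (Int.gcd a b : ℤ) c : ℤ) :=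
            Int.dvd_coe_gcd (Int.dvd_coe_gcd hda hdb) hdc
          rw [hprim] at this
          norm_num at this
        have hcw : c*w = b*a1 - 4*a*a0 := by
          have key : a * (c*w) = a * (b*a1 - 4*a*a0) := by
            linear_combination hct - c*hw
          exact mul_left_cancel₀ ha key
        have hneven : Even (c*w) := by
          rw [hcw]
          rcases hbe with ⟨k, hk⟩
          exact ⟨k*a1 - 2*a*a0, by rw [hk]; ring⟩
        rcases Int.even_mul.mp hneven with h | h
        · exact absurd h hco
        · exact h
      · -- a odd
        have hteven : Even (a*w) := by
          rw [← hw]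
          rcases hbe with ⟨k, hk⟩
          exact ⟨k*a3 - 2*c*a4, by rw [hk]; ring⟩
        rcases Int.even_mul.mp hteven with h | h
        · exact ((Int.not_odd_iff_even.mpr h) hao).elim
        · exact h
    · -- b odd
      have hbw : b*w = 2*(b*a2 - c*a3 - a*a1) := by
        have key : a * (b*w) = a * (2*(b*a2 - c*a3 - a*a1)) := by
          linear_combination hbt - b*hw
        exact mul_left_cancel₀ ha key
      have : Even (b*w) := ⟨b*a2 - c*a3 - a*a1, by rw [hbw]; ring⟩
      rcases Int.even_mul.mp this with h | h
      · exact absurd h (Int.not_even_iff_odd.mpr hbo)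
      · exact h
  rcases hweven with ⟨s, hsw⟩
  -- The three structural relations
  have hR1 : 2*a*s = b*a3 - 4*c*a4 := by rw [hw, hsw]; ring
  have hR2 : a*a1 = b*(a2 - s) - c*a3 := by
    have key : (2*a) * (a*a1) = (2*a) * (b*(a2 - s) - c*a3) := by
      linear_combination hE1 + b*hR1
    exact mul_left_cancel₀ h2a key
  have hR3 : 4*a*a0 = b*a1 - 2*c*s := by
    have key : a * (4*a*a0) = a * (b*a1 - 2*c*s) := by
      linear_combination hct + c*hR1
    exact mul_left_cancel₀ ha key
  -- The six divisibility certificates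
  have hq1 : 4*a^2*(3*s^2 - 2*s*a2 + a3*a1 - 4*a4*a0)
      = (b^2-4*a*c)*(a3^2 - 4*a4*a2 + 4*a4*s) := by
    linear_combination (-4*a*a2 + 6*a*s + b*a3)*hR1 + (4*a*a3 - 4*b*a4)*hR2 + (-4*a*a4)*hR3
  have hq2 : 4*c^2*(3*s^2 - 2*s*a2 + a3*a1 - 4*a4*a0)
      = (b^2-4*a*c)*(a1^2 - 4*a2*a0 + 4*a0*s) := by
    linear_combination (-4*c*a0)*hR1 + (-4*b*a0 + 4*c*a1)*hR2 + (b*a1 - 4*c*a2 + 6*c*s)*hR3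
  have hq3 : b^2*(3*s^2 - 2*s*a2 + a3*a1 - 4*a4*a0)
      = (b^2-4*a*c)*(s^2 - 4*a4*a0) := by
    linear_combination (-4*a*a0)*hR1 + (2*b*s)*hR2 + (2*a*s - b*a3)*hR3
  have hq4 : 4*a*b*(3*s^2 - 2*s*a2 + a3*a1 - 4*a4*a0)
      = (b^2-4*a*c)*(2*a3*s - 4*a4*a1) := by
    linear_combination (-4*a*a1 + 2*b*s)*hR1 + (8*a*s)*hR2 + (-4*b*a4)*hR3
  have hq5 : 4*a*c*(3*s^2 - 2*s*a2 + a3*a1 - 4*a4*a0)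
      = (b^2-4*a*c)*(2*a2*s - 2*s^2 - a3*a1) := by
    linear_combination (-4*a*a0)*hR1 + (2*b*s)*hR2 + (2*a*s - b*a3)*hR3
  have hq6 : 4*b*c*(3*s^2 - 2*s*a2 + a3*a1 - 4*a4*a0)
      = (b^2-4*a*c)*(2*a1*s - 4*a3*a0) := by
    linear_combination (-4*b*a0)*hR1 + (-16*a*a0 + 4*b*a1)*hR2 + (4*a*a1 - 4*b*a2 + 6*b*s)*hR3
  -- L and K are the integers Lz and Kz
  set Lz : ℤ := 3*s - a2 with hLzdef
  set Kz : ℤ := 36*a4*a0 - 9*a3*a1 + 3*a2^2 - (3*s - a2)^2 with hKzdef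
  have haQ : ((a:ℚ)) ≠ 0 := Int.cast_ne_zero.mpr ha
  have hR1Q : (2:ℚ)*a*s = b*a3 - 4*c*a4 := by exact_mod_cast hR1
  have hLQ : L = (Lz : ℚ) := by
    rw [hL, hLzdef, div_eq_iff (by positivity : (2*(a:ℚ)) ≠ 0)]
    push_cast
    linear_combination (-3)*hR1Q
  have hKint : 4*a^3*Kz = 72*b^2*c*a4^2 + 9*a*(b^2 + 4*a*c)*a3^2
      + 8*a^3*a2^2 - 18*b*(b^2 + 4*a*c)*a4*a3
      + 12*a*(3*b^2 - 4*a*c)*a4*a2 - 24*a^2*b*a3*a2 := by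
    rw [hKzdef]
    linear_combination (12*a*a*a2 - 18*a*a*s + 9*a*b*a3 - 18*b*b*a4)*hR1
      + (-36*a*a*a3 + 36*a*b*a4)*hR2 + (36*a*a*a4)*hR3
  have hKintQ : (4:ℚ)*a^3*Kz = 72*b^2*c*a4^2 + 9*a*(b^2 + 4*a*c)*a3^2
      + 8*a^3*a2^2 - 18*b*(b^2 + 4*a*c)*a4*a3
      + 12*a*(3*b^2 - 4*a*c)*a4*a2 - 24*a^2*b*a3*a2 := by exact_mod_cast hKint
  have hKQ : K = (Kz : ℚ) := by
    rw [hK, div_eq_iff (by positivity : (4*(a:ℚ)^3) ≠ 0)]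
    linear_combination -hKintQ
  refine ⟨⟨Lz, hLQ⟩, ⟨Kz, hKQ⟩, ?_, ?_, ?_⟩
  · refine ⟨16*a4*a0 - 4*a3*a1 + a2^2 - 3*s^2 + 2*s*a2, ?_⟩
    rw [hLQ, hKQ, hLzdef, hKzdef, div_eq_iff (by norm_num : (9:ℚ) ≠ 0)]
    push_cast
    ring
  · refine ⟨3*s^2 - 2*s*a2 + a3*a1 - 4*a4*a0, ?_⟩
    rw [hLQ, hKQ, hLzdef, hKzdef, div_eq_iff (by norm_num : (9:ℚ) ≠ 0)]
    push_cast
    ring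
  · refine ⟨X^2*(a3^2 - 4*a4*a2 + 4*a4*s) + 4*Y^2*(s^2 - 4*a4*a0)
      + Z^2*(a1^2 - 4*a2*a0 + 4*a0*s) + 2*X*Y*(2*a3*s - 4*a4*a1)
      + 2*X*Z*(2*a2*s - 2*s^2 - a3*a1) + 2*Y*Z*(2*a1*s - 4*a3*a0), ?_⟩
    have hHd : 4*(3*s^2 - 2*s*a2 + a3*a1 - 4*a4*a0)
        = (b^2-4*a*c) * (X^2*(a3^2 - 4*a4*a2 + 4*a4*s) + 4*Y^2*(s^2 - 4*a4*a0)
          + Z^2*(a1^2 - 4*a2*a0 + 4*a0*s) + 2*X*Y*(2*a3*s - 4*a4*a1)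
          + 2*X*Z*(2*a2*s - 2*s^2 - a3*a1) + 2*Y*Z*(2*a1*s - 4*a3*a0)) := by
      linear_combination X^2*hq1 + 4*Y^2*hq3 + Z^2*hq2 + 2*X*Y*hq4 + 2*X*Z*hq5
        + 2*Y*Z*hq6 + (-(4*(3*s^2 - 2*s*a2 + a3*a1 - 4*a4*a0)*(a*X+b*Y+c*Z+1)))*hbez
    have hHdQ : (4:ℚ)*(3*(s:ℚ)^2 - 2*s*a2 + a3*a1 - 4*a4*a0)
        = ((b:ℚ)^2-4*a*c) * (X^2*(a3^2 - 4*a4*a2 + 4*a4*s) + 4*Y^2*(s^2 - 4*a4*a0)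
          + Z^2*(a1^2 - 4*a2*a0 + 4*a0*s) + 2*X*Y*(2*a3*s - 4*a4*a1)
          + 2*X*Z*(2*a2*s - 2*s^2 - a3*a1) + 2*Y*Z*(2*a1*s - 4*a3*a0)) := by
      exact_mod_cast hHd
    rw [hLQ, hKQ, hLzdef, hKzdef]
    push_cast
    linear_combination 9*hHdQ
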